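/- Let s ∈ ℝ and ε₁, ε₂ ∈ {−1, 1}. Set a = i, b = j, f = ε₁·i, p = 1, q = cos(s ε₁ ε₂) + sin(s ε₁ ε₂)·j. Then q⁻¹ * p⁻¹ * b * p * q = j and q⁻¹ * p⁻¹ * b⁻¹ * p * b * a * f⁻¹ * q * f = i. (The computation in the proof of Proposition 7.2 of the paper: for the representations ρ_ε, the boundary words satisfy ρ_ε(c) = j and ρ_ε(d) = i, which is the key step showing that the involution U_s fixes the corresponding four points of N_s and N'_s.) -/

import Mathlib

open Quaternion

/-- The imaginary unit `i` of the quaternions. -/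
noncomputable def qi : ℍ[ℝ] := ⟨0, 1, 0, 0⟩
/-- The imaginary unit `j` of the quaternions. -/
noncomputable def qj : ℍ[ℝ] := ⟨0, 0, 1, 0⟩

@[simp] lemma qi_re : qi.re = 0 := rfl
@[simp] lemma qi_imI : qi.imI = 1 := rfl
@[simp] lemma qi_imJ : qi.imJ = 0 := rfl
@[simp] lemma qi_imK : qi.imK = 0 := rfl
@[simp] lemma qj_re : qj.re = 0 := rfl
@[simp] lemma qj_imI : qj.imI = 0 := rfl
@[simp] lemma qj_imJ : qj.imJ = 1 := rfl
@[simp] lemma qj_imK : qj.imK = 0 := rfl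

/-- The computation in the proof of Proposition 7.2 of the paper: for the representations
`ρ_ε`, the boundary words satisfy `ρ_ε(c) = j` and `ρ_ε(d) = i`, where `c = q̄ p̄ b p q` and
`d = q̄ p̄ b̄ p b a f̄ q f`. -/
theorem boundary_words_at_four_points (s ε₁ ε₂ : ℝ)
    (hε₁ : ε₁ = 1 ∨ ε₁ = -1) (hε₂ : ε₂ = 1 ∨ ε₂ = -1)
    (a b f p q : ℍ[ℝ])
    (ha : a = qi) (hb : b = qj) (hf : f = ε₁ • qi)
    (hp : p = 1)
    (hq : q = (Real.cos (s * ε₁ * ε₂) : ℍ[ℝ]) + Real.sin (s * ε₁ * ε₂) • qj) :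
    q⁻¹ * p⁻¹ * b * p * q = qj ∧
    q⁻¹ * p⁻¹ * b⁻¹ * p * b * a * f⁻¹ * q * f = qi := by
  subst ha hb hf hp hq
  have hε : ε₁ * ε₁ = 1 := by rcases hε₁ with h|h <;> simp [h]
  set t := s * ε₁ * ε₂ with ht
  have hsc := Real.sin_sq_add_cos_sq t
  have hqinv : ((Real.cos t : ℍ[ℝ]) + Real.sin t • qj)⁻¹ = (Real.cos t : ℍ[ℝ]) - Real.sin t • qj :=
    inv_eq_of_mul_eq_one_right (by ext <;> simp [Quaternion.ext_iff] <;> nlinarith [hsc])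
  have hbinv : (qj)⁻¹ = -qj := inv_eq_of_mul_eq_one_right (by ext <;> simp [Quaternion.ext_iff])
  have hfinv : (ε₁ • qi)⁻¹ = (-ε₁) • qi := inv_eq_of_mul_eq_one_right (by ext <;> simp [Quaternion.ext_iff] <;> nlinarith [hε])
  rw [hqinv, hbinv, hfinv, inv_one]
  constructor <;> (ext <;> simp <;> first | nlinarith [hsc, hε] | (right; ring))
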